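/- Let P(q) = q - p with p ∈ L_I, let z = x + Iy ∈ L_I and q = x + Jy with J ∈ 𝕊. Then the regular power satisfies P^{*n}(q) = ((1-JI)/2)(z-p)ⁿ + ((1+JI)/2)(z̄-p)ⁿ. -/

import Mathlib

local notation "ℍ" => Quaternion ℝ

/-- Convolution (star) product of coefficient sequences. -/
noncomputable def conv (a b : ℕ → ℍ) : ℕ → ℍ := fun n => ∑ k ∈ Finset.range (n+1), a k * b (n-k)

/-- Coefficient sequence of the polynomial `q - p` (right coefficients). -/
noncomputable def binomSeq (p : ℍ) : ℕ → ℍ := fun k => if k = 0 then -p else if k = 1 then 1 else 0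

/-- n-fold star (convolution) power of a coefficient sequence. -/
noncomputable def convPow (a : ℕ → ℍ) : ℕ → ℕ → ℍ
  | 0 => fun k => if k = 0 then 1 else 0
  | n+1 => conv (convPow a n) a

/-- The regular power `(q-p)^{*n}` evaluated at `q`. -/
noncomputable def starPow (p : ℍ) (n : ℕ) (q : ℍ) : ℍ :=
  ∑ k ∈ Finset.range (n+1), q^k * convPow (binomSeq p) n k

noncomputable def omegaDist (q p : ℍ) : ℝ :=
  Real.sqrt ((q.re - p.re)^2 + (‖q.im‖ + ‖p.im‖)^2)

/-- `q` and `p` lie in a common complex line `L_I = ℝ + Iℝ`. -/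
def SameLine (q p : ℍ) : Prop :=
  ∃ I : ℍ, I^2 = -1 ∧ (∃ a b : ℝ, q = (a : ℍ) + b • I) ∧ (∃ a b : ℝ, p = (a : ℍ) + b • I)

open Classical in
noncomputable def sigmaDist (q p : ℍ) : ℝ :=
  if SameLine q p then ‖q - p‖ else omegaDist q p

open Polynomial in
lemma binomSeq_eq_coeff (p : ℍ) (k : ℕ) :
    binomSeq p k = ((X - C p : Polynomial ℍ)).coeff k := by
  rcases k with _|_|k <;> simp [binomSeq, coeff_sub, coeff_X, coeff_C]

open Polynomial in
lemma convPow_eq_coeff (p : ℍ) (n k : ℕ) :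
    convPow (binomSeq p) n k = ((X - C p : Polynomial ℍ)^n).coeff k := by
  induction n generalizing k with
  | zero => rcases k with _|k <;> simp [convPow, coeff_one]
  | succ n ih =>
    show conv (convPow (binomSeq p) n) (binomSeq p) k = _
    rw [pow_succ, coeff_mul, Finset.Nat.sum_antidiagonal_eq_sum_range_succ_mk]
    simp only [conv]
    exact Finset.sum_congr rfl fun j _ => by rw [ih, binomSeq_eq_coeff]

open Polynomial in
lemma convPow_formula (p : ℍ) (n k : ℕ) :
    convPow (binomSeq p) n k = (-p)^(n-k) * (n.choose k : ℍ) := by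
  rw [convPow_eq_coeff, sub_eq_add_neg, ← C_neg, coeff_X_add_C_pow]

lemma re_eq_zero_of_sq_eq_neg_one (I : ℍ) (hI : I^2 = -1) : I.re = 0 := by
  have h0 := congrArg QuaternionAlgebra.re hI
  have h1 := congrArg QuaternionAlgebra.imI hI
  have h2 := congrArg QuaternionAlgebra.imJ hI
  have h3 := congrArg QuaternionAlgebra.imK hI
  rw [sq] at h0 h1 h2 h3
  simp [Quaternion.re_mul, Quaternion.imI_mul, Quaternion.imJ_mul, Quaternion.imK_mul, Quaternion.re_one, Quaternion.imI_one,
    Quaternion.imJ_one, Quaternion.imK_one] at h0 h1 h2 h3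
  nlinarith [sq_nonneg I.re, sq_nonneg I.imI, sq_nonneg I.imJ, sq_nonneg I.imK, sq_nonneg (I.re^2+1)]

lemma star_of_sq_eq_neg_one (I : ℍ) (hI : I^2 = -1) : star I = -I := by
  rw [Quaternion.star_eq_two_re_sub, re_eq_zero_of_sq_eq_neg_one I hI]
  simp

lemma key_intertwine_A (I J : ℍ) (hI : I^2 = -1) (hJ : J^2 = -1) (x y : ℝ) :
    ((x:ℍ) + y • J) * (1 - J*I) = (1 - J*I) * ((x:ℍ) + y • I) := by
  have hJ' : J*J = -1 := by rw [← sq]; exact hJ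
  have hI' : I*I = -1 := by rw [← sq]; exact hI
  have e1 : J * (J * I) = -I := by rw [← mul_assoc, hJ']; simp
  have e2 : I * ((y:ℍ) * I) = -(y:ℍ) := by
    rw [Quaternion.coe_commutes, ← mul_assoc, hI']; simp
  have e3 : J * (I * (x:ℍ)) = (x:ℍ) * (J * I) := by
    rw [← Quaternion.coe_commutes, ← mul_assoc, ← mul_assoc, Quaternion.coe_commutes]
  rw [← Quaternion.coe_mul_eq_smul, ← Quaternion.coe_mul_eq_smul]
  noncomm_ring
  rw [e1, e2, e3]
  have e4 : J * -(y:ℍ) = -(y:ℍ) * J := by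
    rw [mul_neg, ← Quaternion.coe_commutes, neg_mul]
  rw [e4]
  noncomm_ring

lemma key_intertwine_B (I J : ℍ) (hI : I^2 = -1) (hJ : J^2 = -1) (x y : ℝ) :
    ((x:ℍ) + y • J) * (1 + J*I) = (1 + J*I) * ((x:ℍ) - y • I) := by
  have hJ' : J*J = -1 := by rw [← sq]; exact hJ
  have hI' : I*I = -1 := by rw [← sq]; exact hI
  have e1 : J * (J * I) = -I := by rw [← mul_assoc, hJ']; simp
  have e2 : I * ((y:ℍ) * I) = -(y:ℍ) := by
    rw [Quaternion.coe_commutes, ← mul_assoc, hI']; simp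
  have e3 : J * (I * (x:ℍ)) = (x:ℍ) * (J * I) := by
    rw [← Quaternion.coe_commutes, ← mul_assoc, ← mul_assoc, Quaternion.coe_commutes]
  rw [← Quaternion.coe_mul_eq_smul, ← Quaternion.coe_mul_eq_smul]
  noncomm_ring
  rw [e1, e2, e3]
  have e4 : J * -(y:ℍ) = -(y:ℍ) * J := by
    rw [mul_neg, ← Quaternion.coe_commutes, neg_mul]
  rw [e4]
  noncomm_ring

lemma line_commute (I : ℍ) (x y a b : ℝ) :
    Commute ((x:ℍ) + (y:ℍ) * I) ((a:ℍ) + (b:ℍ) * I) := by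
  have c1 : Commute ((y:ℍ)*I) I :=
    Commute.mul_left (Quaternion.coe_commute y I) (Commute.refl I)
  have c2 : Commute ((y:ℍ)*I) ((b:ℍ)*I) :=
    Commute.mul_right (Quaternion.coe_commute b _).symm c1
  have c3 : Commute ((y:ℍ)*I) ((a:ℍ)+(b:ℍ)*I) :=
    Commute.add_right (Quaternion.coe_commute a _).symm c2
  exact Commute.add_left (Quaternion.coe_commute x _) c3

lemma half_comm (u v : ℍ) : u * v / 2 = u / 2 * v := by
  have c2 : Commute ((2:ℍ))⁻¹ v := by
    have h2 : (2:ℍ) = ((2:ℝ):ℍ) := by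
      rw [show ((2:ℝ):ℍ) = ((1:ℝ):ℍ) + ((1:ℝ):ℍ) by rw [← Quaternion.coe_add]; norm_num]
      norm_num
    exact Commute.inv_left₀ (h2 ▸ Quaternion.coe_commute 2 v)
  rw [div_eq_mul_inv, div_eq_mul_inv, mul_assoc, mul_assoc, c2.eq]

lemma pow_intertwine (A q z : ℍ) (h : q * A = A * z) : ∀ k : ℕ, q^k * A = A * z^k := by
  intro k; induction k with
  | zero => simp
  | succ k ih => rw [pow_succ, mul_assoc, h, ← mul_assoc, ih, mul_assoc, ← pow_succ]

theorem starPow_representation (I J : ℍ) (hI : I^2 = -1) (hJ : J^2 = -1)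
    (p : ℍ) (hp : ∃ a b : ℝ, p = (a : ℍ) + b • I) (x y : ℝ) (n : ℕ) :
    starPow p n ((x : ℍ) + y • J) =
      ((1 - J*I)/2) * (((x : ℍ) + y • I) - p)^n +
      ((1 + J*I)/2) * ((star ((x : ℍ) + y • I)) - p)^n := by
  obtain ⟨a, b, hpab⟩ := hp
  have hstar : star ((x:ℍ) + y • I) = (x:ℍ) - y • I := by
    have h1 : star ((y:ℝ) • I : ℍ) = -(y • I) := by
      rw [← Quaternion.coe_mul_eq_smul]
      rw [star_mul, star_of_sq_eq_neg_one I hI, Quaternion.star_coe, neg_mul]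
      rw [← Quaternion.coe_commutes]
    rw [star_add, h1, Quaternion.star_coe, sub_eq_add_neg]
  have hqA : ((x:ℍ) + y • J) * ((1 - J*I)/2) = ((1 - J*I)/2) * ((x:ℍ) + y • I) := by
    rw [mul_div_assoc', key_intertwine_A I J hI hJ x y, half_comm]
  have hqB : ((x:ℍ) + y • J) * ((1 + J*I)/2) = ((1 + J*I)/2) * ((x:ℍ) - y • I) := by
    rw [mul_div_assoc', key_intertwine_B I J hI hJ x y, half_comm]
  have hpowA := pow_intertwine _ _ _ hqA
  have hpowB := pow_intertwine _ _ _ hqB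
  have hAB : ((1 - J*I)/2) + ((1 + J*I)/2) = 1 := by
    rw [← add_div]
    have h1 : (1 - J*I) + (1 + J*I) = 2 := by
      rw [sub_add_add_cancel]; norm_num [two_smul]
    have h2 : (2:ℍ) ≠ 0 := by
      intro h
      have h2' : QuaternionAlgebra.re (2:ℍ) = 2 := rfl
      have := congrArg QuaternionAlgebra.re h
      rw [h2'] at this
      norm_num [Quaternion.re_zero] at this
    rw [h1, div_self h2]
  have hqpow : ∀ k : ℕ, ((x:ℍ) + y • J)^k =
      ((1 - J*I)/2) * ((x:ℍ) + y • I)^k + ((1 + J*I)/2) * ((x:ℍ) - y • I)^k := by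
    intro k
    have h := congrArg (fun t => ((x:ℍ) + y • J)^k * t) hAB
    simp only [mul_one, mul_add] at h
    rw [← h, hpowA, hpowB]
  have cz : Commute ((x:ℍ) + y • I) (-p) := by
    rw [hpab, ← Quaternion.coe_mul_eq_smul, ← Quaternion.coe_mul_eq_smul]
    exact (line_commute I x y a b).neg_right
  have cw : Commute ((x:ℍ) - y • I) (-p) := by
    rw [hpab, ← Quaternion.coe_mul_eq_smul, ← Quaternion.coe_mul_eq_smul, sub_eq_add_neg,
      ← neg_mul, ← Quaternion.coe_neg]
    exact (line_commute I x (-y) a b).neg_right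
  have hzp : (((x:ℍ) + y • I) - p)^n =
      ∑ k ∈ Finset.range (n+1), ((x:ℍ) + y • I)^k * ((-p)^(n-k) * (n.choose k : ℍ)) := by
    rw [sub_eq_add_neg, cz.add_pow]
    exact Finset.sum_congr rfl fun k _ => by rw [mul_assoc]
  have hwp : (((x:ℍ) - y • I) - p)^n =
      ∑ k ∈ Finset.range (n+1), ((x:ℍ) - y • I)^k * ((-p)^(n-k) * (n.choose k : ℍ)) := by
    rw [sub_eq_add_neg, cw.add_pow]
    exact Finset.sum_congr rfl fun k _ => by rw [mul_assoc]
  rw [hstar, starPow, hzp, hwp, Finset.mul_sum, Finset.mul_sum, ← Finset.sum_add_distrib]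
  refine Finset.sum_congr rfl fun k _ => ?_
  rw [convPow_formula, hqpow k, add_mul, mul_assoc, mul_assoc]
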